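/- arXiv:0902.2495 — 4 statements merged into one kernel-verified Lean document; each statement's English description precedes it below -/
import Mathlib

section
/- Let M and N be purely imaginary octonions with |M| = |N| = 1 and Re(M * conj(N)) = 0. Then for every z in the complex plane R ⊕ M·R (i.e., z = a + bM with a,b real), one has N*(z*conj(N)) = conj(z) and (N*z)*conj(N) = conj(z). -/
/-- The octonion algebra `𝕆`, realized as the Cayley–Dickson double of the
real quaternions: pairs `(x, y)` of quaternions with multiplication
`(u, v) * (w, x) = (u*w - x̄*v, x*u + v*w̄)`. -/
structure Octonion : Type where
  x : Quaternion ℝ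
  y : Quaternion ℝ

namespace Octonion

noncomputable instance : Add Octonion := ⟨fun a b => ⟨a.x + b.x, a.y + b.y⟩⟩
noncomputable instance : Neg Octonion := ⟨fun a => ⟨-a.x, -a.y⟩⟩
noncomputable instance : Mul Octonion :=
  ⟨fun a b => ⟨a.x * b.x - star b.y * a.y, b.y * a.x + a.y * star b.x⟩⟩
noncomputable instance : One Octonion := ⟨⟨1, 0⟩⟩
noncomputable instance : SMul ℝ Octonion := ⟨fun r a => ⟨r • a.x, r • a.y⟩⟩

/-- Octonion conjugation. -/
def conj (a : Octonion) : Octonion := ⟨star a.x, -a.y⟩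

/-- Real part of an octonion. -/
def re (a : Octonion) : ℝ := a.x.re

/-- Squared norm of an octonion. -/
def normSq (a : Octonion) : ℝ := Quaternion.normSq a.x + Quaternion.normSq a.y

end Octonion


theorem Octonion.mul_def (a b : Octonion) :
    a * b = ⟨a.x * b.x - star b.y * a.y, b.y * a.x + a.y * star b.x⟩ := rfl
theorem Octonion.add_def (a b : Octonion) : a + b = ⟨a.x + b.x, a.y + b.y⟩ := rfl
theorem Octonion.smul_def (r : ℝ) (a : Octonion) : r • a = ⟨r • a.x, r • a.y⟩ := rfl
theorem Octonion.one_def : (1 : Octonion) = ⟨1, 0⟩ := rfl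

theorem Octonion.ext' {a b : Octonion} (h1 : a.x = b.x) (h2 : a.y = b.y) : a = b := by
  cases a; cases b; simp_all

/-- If `M`, `N` are orthogonal purely imaginary unit octonions, then for every
`z = a + b•M` in the complex plane `ℝ ⊕ Mℝ` one has `N*(z*conj N) = conj z`
and `(N*z)*conj N = conj z`. -/
theorem octonion_conj_via_orthogonal_unit (M N : Octonion)
    (hM : Octonion.re M = 0) (hN : Octonion.re N = 0)
    (hMnorm : Octonion.normSq M = 1) (hNnorm : Octonion.normSq N = 1)
    (hMN : Octonion.re (M * Octonion.conj N) = 0) :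
    ∀ a b : ℝ,
      N * ((a • (1 : Octonion) + b • M) * Octonion.conj N)
          = Octonion.conj (a • (1 : Octonion) + b • M) ∧
      (N * (a • (1 : Octonion) + b • M)) * Octonion.conj N
          = Octonion.conj (a • (1 : Octonion) + b • M) := by
  intro a b
  obtain ⟨XM, YM⟩ := M
  obtain ⟨XN, YN⟩ := N
  simp only [Octonion.re, Octonion.normSq, Octonion.conj, Octonion.mul_def,
    Octonion.add_def, Octonion.smul_def, Octonion.one_def,
    Quaternion.normSq_def'] at *
  simp only [Quaternion.ext_iff, Quaternion.re_mul, Quaternion.imI_mul,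
    Quaternion.imJ_mul, Quaternion.imK_mul, Quaternion.re_add, Quaternion.imI_add,
    Quaternion.imJ_add, Quaternion.imK_add, Quaternion.re_sub, Quaternion.imI_sub,
    Quaternion.imJ_sub, Quaternion.imK_sub, Quaternion.re_neg, Quaternion.imI_neg,
    Quaternion.imJ_neg, Quaternion.imK_neg, Quaternion.re_star, Quaternion.imI_star,
    Quaternion.imJ_star, Quaternion.imK_star, Quaternion.re_smul, Quaternion.imI_smul,
    Quaternion.imJ_smul, Quaternion.imK_smul, Quaternion.re_one, Quaternion.imI_one,
    Quaternion.imJ_one, Quaternion.imK_one, Quaternion.re_zero, Quaternion.imI_zero,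
    Quaternion.imJ_zero, Quaternion.imK_zero, smul_eq_mul] at *
  refine ⟨Octonion.ext' ?_ ?_, Octonion.ext' ?_ ?_⟩ <;>
    simp only [Quaternion.ext_iff, Quaternion.re_mul, Quaternion.imI_mul,
      Quaternion.imJ_mul, Quaternion.imK_mul, Quaternion.re_add, Quaternion.imI_add,
      Quaternion.imJ_add, Quaternion.imK_add, Quaternion.re_sub, Quaternion.imI_sub,
      Quaternion.imJ_sub, Quaternion.imK_sub, Quaternion.re_neg, Quaternion.imI_neg,
      Quaternion.imJ_neg, Quaternion.imK_neg, Quaternion.re_star, Quaternion.imI_star,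
      Quaternion.imJ_star, Quaternion.imK_star, Quaternion.re_smul, Quaternion.imI_smul,
      Quaternion.imJ_smul, Quaternion.imK_smul, Quaternion.re_one, Quaternion.imI_one,
      Quaternion.imJ_one, Quaternion.imK_one, Quaternion.re_zero, Quaternion.imI_zero,
      Quaternion.imJ_zero, Quaternion.imK_zero, smul_eq_mul]
  all_goals
    obtain ⟨m1, m2, m3, m4⟩ := XM
    obtain ⟨m5, m6, m7, m8⟩ := YM
    obtain ⟨n1, n2, n3, n4⟩ := XN
    obtain ⟨n5, n6, n7, n8⟩ := YN
    dsimp only at *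
    subst hM hN
  · exact ⟨by linear_combination a*hNnorm, by linear_combination (-b*m2)*hNnorm + (2*b*n2)*hMN, by linear_combination (-b*m3)*hNnorm + (2*b*n3)*hMN, by linear_combination (-b*m4)*hNnorm + (2*b*n4)*hMN⟩
  · exact ⟨by linear_combination (-b*m5)*hNnorm + (2*b*n5)*hMN, by linear_combination (-b*m6)*hNnorm + (2*b*n6)*hMN, by linear_combination (-b*m7)*hNnorm + (2*b*n7)*hMN, by linear_combination (-b*m8)*hNnorm + (2*b*n8)*hMN⟩
  · exact ⟨by linear_combination a*hNnorm, by linear_combination (-b*m2)*hNnorm + (2*b*n2)*hMN, by linear_combination (-b*m3)*hNnorm + (2*b*n3)*hMN, by linear_combination (-b*m4)*hNnorm + (2*b*n4)*hMN⟩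
  · exact ⟨by linear_combination (-b*m5)*hNnorm + (2*b*n5)*hMN, by linear_combination (-b*m6)*hNnorm + (2*b*n6)*hMN, by linear_combination (-b*m7)*hNnorm + (2*b*n7)*hMN, by linear_combination (-b*m8)*hNnorm + (2*b*n8)*hMN⟩
end

section
/- Let K and M be purely imaginary octonions with |K| = |M| = 1 and K orthogonal to M (Re(K * conj(M)) = 0). Then for every real t, K * exp(Mt) = cos(t)·K + sin(t)·(K*M), this element N(t) := K*exp(Mt) is purely imaginary of norm 1, and K * exp(Mt) = exp((π/2)·N(t)). -/
namespace Octonion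

@[ext] lemma ext'_s6 {a b : Octonion} (hx : a.x = b.x) (hy : a.y = b.y) : a = b := by
  cases a; cases b; simp_all

@[simp] lemma add_x (a b : Octonion) : (a + b).x = a.x + b.x := rfl
@[simp] lemma add_y (a b : Octonion) : (a + b).y = a.y + b.y := rfl
@[simp] lemma mul_x (a b : Octonion) : (a * b).x = a.x * b.x - star b.y * a.y := rfl
@[simp] lemma mul_y (a b : Octonion) : (a * b).y = b.y * a.x + a.y * star b.x := rfl
@[simp] lemma one_x : (1 : Octonion).x = 1 := rfl
@[simp] lemma one_y : (1 : Octonion).y = 0 := rfl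
@[simp] lemma smul_x (r : ℝ) (a : Octonion) : (r • a).x = r • a.x := rfl
@[simp] lemma smul_y (r : ℝ) (a : Octonion) : (r • a).y = r • a.y := rfl

end Octonion

/-- For a purely imaginary unit octonion `M`, `exp(tM) := cos t + sin t • M`. -/
noncomputable def expIm (M : Octonion) (t : ℝ) : Octonion :=
  Real.cos t • (1 : Octonion) + Real.sin t • M

lemma octonion_part1 (K M : Octonion) (t : ℝ) :
    K * expIm M t = Real.cos t • K + Real.sin t • (K * M) := by
  ext <;> simp [expIm, mul_add, add_mul, mul_smul_comm, smul_mul_assoc, star_smul] <;> ring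

lemma octonion_key (K M : Octonion) (c s : ℝ) :
    Octonion.normSq (c • K + s • (K * M)) =
      c ^ 2 * Octonion.normSq K + s ^ 2 * (Octonion.normSq K * Octonion.normSq M)
        + 2 * c * s * (Octonion.normSq K * Octonion.re M) := by
  simp [Octonion.normSq, Octonion.re, Quaternion.normSq_def', Quaternion.ext_iff,
    Quaternion.re_mul, Quaternion.imI_mul, Quaternion.imJ_mul, Quaternion.imK_mul]
  ring

lemma octonion_keyre (K M : Octonion) (c s : ℝ) :
    Octonion.re (c • K + s • (K * M)) = c * Octonion.re K + s * Octonion.re (K * M) := by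
  simp [Octonion.re]

lemma octonion_re_mul (K M : Octonion) :
    Octonion.re (K * M)
      = - Octonion.re (K * Octonion.conj M) + 2 * Octonion.re K * Octonion.re M := by
  simp [Octonion.re, Octonion.conj, Quaternion.ext_iff, Quaternion.re_mul]
  ring

/-- Let `K`, `M` be orthogonal purely imaginary unit octonions. Then
`K * exp(Mt) = cos t • K + sin t • (K*M)`, the element `N(t) := K * exp(Mt)`
is purely imaginary of norm 1, and `K * exp(Mt) = exp((π/2)·N(t))`. -/
theorem octonion_K_exp (K M : Octonion)
    (hK : Octonion.re K = 0) (hM : Octonion.re M = 0)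
    (hKnorm : Octonion.normSq K = 1) (hMnorm : Octonion.normSq M = 1)
    (hKM : Octonion.re (K * Octonion.conj M) = 0) (t : ℝ) :
    K * expIm M t = Real.cos t • K + Real.sin t • (K * M) ∧
    Octonion.re (K * expIm M t) = 0 ∧
    Octonion.normSq (K * expIm M t) = 1 ∧
    K * expIm M t
      = Real.cos (Real.pi / 2) • (1 : Octonion)
        + Real.sin (Real.pi / 2) • (K * expIm M t) := by
  have h1 := octonion_part1 K M t
  have hreKM : Octonion.re (K * M) = 0 := by
    rw [octonion_re_mul, hKM, hK]; ring
  refine ⟨h1, ?_, ?_, ?_⟩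
  · rw [h1, octonion_keyre, hK, hreKM]; ring
  · rw [h1, octonion_key, hKnorm, hMnorm, hM]
    have := Real.sin_sq_add_cos_sq t
    nlinarith [this]
  · rw [Real.cos_pi_div_two, Real.sin_pi_div_two]
    ext <;> simp
end

section
/- A quaternion y with polar form y = ρ·exp(S), where ρ = |y| ≥ 0 and S is purely imaginary, satisfies y² = -1 if and only if ρ = 1 and |S| = π(m + 1/2) for some nonnegative integer m. -/
open scoped Quaternion

/-- Exponential of a purely imaginary quaternion:
`exp S = cos |S| + (sin |S| / |S|) • S` (with `exp 0 = 1`). -/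
noncomputable def expPure (S : ℍ[ℝ]) : ℍ[ℝ] :=
  Real.cos ‖S‖ • (1 : ℍ[ℝ]) + (Real.sin ‖S‖ / ‖S‖) • S

lemma combo_eq_neg_one_iff (S : ℍ[ℝ]) (hS : S.re = 0) (hS0 : S ≠ 0) (A B : ℝ) :
    (A • (1 : ℍ[ℝ]) + B • S) = -1 ↔ A = -1 ∧ B = 0 := by
  constructor
  · intro h
    have hre := congrArg QuaternionAlgebra.re h
    simp [hS] at hre
    refine ⟨hre, ?_⟩
    have : B • S = 0 := by
      have := h
      rw [hre] at this
      simpa using this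
    rcases smul_eq_zero.mp this with h' | h'
    · exact h'
    · exact absurd h' hS0
  · rintro ⟨hA, hB⟩
    simp [hA, hB]

/-- A quaternion `y = ρ·exp(S)` with `ρ = |y|` and `S` purely imaginary
satisfies `y² = -1` if and only if `ρ = 1` and `|S| = π(m + 1/2)` for some
nonnegative integer `m`. -/
theorem quaternion_sq_eq_neg_one_iff (y S : ℍ[ℝ]) (ρ : ℝ)
    (hS : S.re = 0) (hρ : ρ = ‖y‖) (hy : y = ρ • expPure S) :
    y * y = -1 ↔ ρ = 1 ∧ ∃ m : ℕ, ‖S‖ = Real.pi * (m + 1 / 2) := by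
  have hπ := Real.pi_pos
  by_cases hS0 : S = 0
  · subst hS0
    simp only [expPure, norm_zero, Real.cos_zero, smul_zero, add_zero, one_smul] at hy
    constructor
    · intro h
      exfalso
      rw [hy] at h
      have hre := congrArg QuaternionAlgebra.re h
      simp [smul_smul] at hre
      nlinarith [hre]
    · rintro ⟨-, m, hm⟩
      exfalso
      have : (0:ℝ) < Real.pi * (m + 1/2) := by positivity
      rw [← hm] at this
      simp at this
  · have hn : (0:ℝ) < ‖S‖ := norm_pos_iff.mpr hS0
    set n := ‖S‖ with hndef
    set c := Real.cos n with hcdef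
    set s := Real.sin n with hsdef
    have hSS : S * S = (-(n*n)) • (1 : ℍ[ℝ]) := by
      have h1 : S ^ 2 = -((Quaternion.normSq S : ℝ) : ℍ[ℝ]) :=
        Quaternion.sq_eq_neg_normSq.mpr hS
      rw [sq] at h1
      rw [h1, Quaternion.normSq_eq_norm_mul_self]
      ext <;> simp [hndef]
    have hy2 : y * y = (ρ^2*(c^2 - s^2)) • (1 : ℍ[ℝ]) + (2*ρ^2*c*s/n) • S := by
      rw [hy, expPure, ← hndef, ← hcdef, ← hsdef]
      have hrepr : ρ • (c • (1:ℍ[ℝ]) + (s/n) • S) = (ρ*c) • (1:ℍ[ℝ]) + (ρ*(s/n)) • S := by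
        simp [smul_add, smul_smul]
      rw [hrepr, mul_add, add_mul, add_mul]
      simp only [smul_mul_assoc, mul_smul_comm, smul_smul, mul_one, one_mul, hSS]
      match_scalars <;> (field_simp; ring)
    rw [hy2, combo_eq_neg_one_iff S hS hS0]
    have hpyth : c^2 + s^2 = 1 := by
      rw [hcdef, hsdef]; exact Real.cos_sq_add_sin_sq n
    constructor
    · rintro ⟨hA, hB⟩
      have hρ0 : 0 ≤ ρ := hρ ▸ norm_nonneg y
      have hcs : c * s = 0 := by
        have hρne : ρ ≠ 0 := by
          intro h0
          rw [h0] at hA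
          norm_num at hA
        have h2 : 2 * ρ ^ 2 * c * s = 0 := by
          rcases div_eq_zero_iff.mp hB with h | h
          · exact h
          · exact absurd h (ne_of_gt hn)
        have h3 : (2 * ρ ^ 2) * (c * s) = 0 := by
          rw [show (2 * ρ ^ 2) * (c * s) = 2 * ρ ^ 2 * c * s from by ring]; exact h2
        rcases mul_eq_zero.mp h3 with h | h
        · exfalso; have : ρ ^ 2 ≠ 0 := pow_ne_zero 2 hρne
          nlinarith
        · exact h
      have hc : c = 0 := by
        rcases mul_eq_zero.mp hcs with h' | h'
        · exact h'
        · exfalso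
          rw [h'] at hpyth hA
          nlinarith
      have hρ1 : ρ = 1 := by
        rw [hc] at hA hpyth
        nlinarith
      refine ⟨hρ1, ?_⟩
      obtain ⟨k, hk⟩ := Real.cos_eq_zero_iff.mp hc
      have hk0 : 0 ≤ k := by
        by_contra hneg
        push_neg at hneg
        have hkr : (k:ℝ) ≤ -1 := by exact_mod_cast (by omega : k ≤ -1)
        rw [hk] at hn
        nlinarith
      refine ⟨k.toNat, ?_⟩
      have hcast : ((k.toNat : ℕ) : ℝ) = (k : ℝ) := by
        exact_mod_cast Int.toNat_of_nonneg hk0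
      rw [hk, hcast]
      ring
    · rintro ⟨hρ1, m, hm⟩
      have hc : c = 0 := by
        rw [hcdef]
        apply Real.cos_eq_zero_iff.mpr
        exact ⟨m, by rw [hm]; push_cast; ring⟩
      have hs2 : s^2 = 1 := by nlinarith
      constructor
      · rw [hρ1, hc]; nlinarith
      · rw [hc]; ring
end

section
/- Given a Lie algebra g over a commutative ring with symmetric invariant form, the central extension L̂ = (R[z,z⁻¹] ⊗ g) ⊕ R·K with bracket [a + αK, b + βK] := [a,b]₀ + ω(a,b)·K (where ω(P⊗x, Q⊗y) = res(P'Q)(x|y) and K central) satisfies the Jacobi identity, hence L̂ is a Lie algebra. -/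
open LaurentPolynomial
open scoped LaurentPolynomial

/-- Formal derivative of a Laurent polynomial. -/
noncomputable def lderiv {R : Type*} [Ring R] (f : R[T;T⁻¹]) : R[T;T⁻¹] :=
  Finsupp.sum f.coeff fun n a => (n : ℤ) • (LaurentPolynomial.C a * LaurentPolynomial.T (n - 1))

/-- The residue of a Laurent polynomial: the coefficient of `z⁻¹`. -/
noncomputable def lres {R : Type*} [Ring R] (f : R[T;T⁻¹]) : R :=
  (f.coeff : ℤ →₀ R) (-1)

/-- The operator `d_l P := -z^{l+1} P'`. -/
noncomputable def dOp {R : Type*} [Ring R] (l : ℤ) (f : R[T;T⁻¹]) : R[T;T⁻¹] :=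
  -(LaurentPolynomial.T (l + 1) * lderiv f)

section aux
variable {R : Type*} [Ring R]

lemma lderiv_CT (a : R) (n : ℤ) :
    lderiv (C a * T n) = (n : ℤ) • (C a * T (n - 1)) := by
  rw [← single_eq_C_mul_T, lderiv, AddMonoidAlgebra.coeff_single, Finsupp.sum_single_index]
  simp

lemma CT_mul (a b : R) (m n : ℤ) :
    (C a * T m) * (C b * T n) = C (a * b) * T (m + n) := by
  rw [← single_eq_C_mul_T, ← single_eq_C_mul_T, ← single_eq_C_mul_T]
  exact AddMonoidAlgebra.single_mul_single _ _ _ _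

lemma lderiv_zero : lderiv (0 : R[T;T⁻¹]) = 0 := by
  simp [lderiv]

lemma lderiv_add (f g : R[T;T⁻¹]) : lderiv (f + g) = lderiv f + lderiv g := by
  unfold lderiv
  rw [AddMonoidAlgebra.coeff_add]
  apply Finsupp.sum_add_index <;> intros <;> simp [add_smul, mul_add, add_mul, map_add]

lemma lderiv_mul (f g : R[T;T⁻¹]) :
    lderiv (f * g) = lderiv f * g + f * lderiv g := by
  induction f using LaurentPolynomial.induction_on' with
  | add p q hp hq =>
    rw [add_mul, lderiv_add, hp, hq]; simp only [lderiv_add, add_mul]; abel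
  | C_mul_T m a =>
    induction g using LaurentPolynomial.induction_on' with
    | add p q hp hq =>
      rw [mul_add, lderiv_add, hp, hq]; simp only [lderiv_add, mul_add]; abel
    | C_mul_T n b =>
      rw [CT_mul, lderiv_CT, lderiv_CT, lderiv_CT, smul_mul_assoc, mul_smul_comm,
        CT_mul, CT_mul, show m - 1 + n = m + n - 1 by ring,
        show m + (n - 1) = m + n - 1 by ring, ← add_zsmul]

noncomputable def lresHom : R[T;T⁻¹] →+ R where
  toFun := lres
  map_zero' := rfl
  map_add' := fun _ _ => rfl

lemma lres_add (f g : R[T;T⁻¹]) : lres (f + g) = lres f + lres g :=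
  map_add (lresHom) f g

lemma lres_CT (a : R) (n : ℤ) (h : n ≠ -1) : lres (C a * T n) = 0 := by
  rw [← single_eq_C_mul_T, lres, AddMonoidAlgebra.coeff_single, Finsupp.single_apply, if_neg h]

lemma lres_lderiv (f : R[T;T⁻¹]) : lres (lderiv f) = 0 := by
  induction f using LaurentPolynomial.induction_on' with
  | add p q hp hq => rw [lderiv_add, lres_add, hp, hq, add_zero]
  | C_mul_T n a =>
    have h1 : ∀ (k : ℤ) (f : R[T;T⁻¹]), lres (k • f) = k • lres f :=
      fun k f => map_zsmul lresHom k f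
    rcases eq_or_ne n 0 with h | h
    · rw [lderiv_CT, h, zero_smul]; exact map_zero lresHom
    · rw [lderiv_CT, h1, lres_CT a _ (by omega), smul_zero]

end aux

open scoped TensorProduct

/-- The bracket of the central extension
`L̂ = (R[z,z⁻¹] ⊗ g) ⊕ R·K`, `[a + αK, b + βK] = [a,b]₀ + ω(a,b)K`. -/
noncomputable def centralBracket {R : Type*} [CommRing R]
    {g : Type*} [LieRing g] [LieAlgebra R g]
    (ω : (R[T;T⁻¹] ⊗[R] g) →ₗ[R] (R[T;T⁻¹] ⊗[R] g) →ₗ[R] R)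
    (u v : (R[T;T⁻¹] ⊗[R] g) × R) : (R[T;T⁻¹] ⊗[R] g) × R :=
  (⁅u.1, v.1⁆, ω u.1 v.1)

section cocycle
variable {R : Type*} [CommRing R] {g : Type*} [LieRing g] [LieAlgebra R g]

lemma cocycle_sum
    (B : g →ₗ[R] g →ₗ[R] R)
    (hsym : ∀ x y : g, B x y = B y x)
    (hinv : ∀ x y z : g, B ⁅x, y⁆ z = B x ⁅y, z⁆)
    (ω : (R[T;T⁻¹] ⊗[R] g) →ₗ[R] (R[T;T⁻¹] ⊗[R] g) →ₗ[R] R)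
    (hω : ∀ (P Q : R[T;T⁻¹]) (x y : g),
      ω (P ⊗ₜ[R] x) (Q ⊗ₜ[R] y) = lres (lderiv P * Q) * B x y) :
    ∀ a b c : R[T;T⁻¹] ⊗[R] g, ω ⁅a, b⁆ c + ω ⁅b, c⁆ a + ω ⁅c, a⁆ b = 0 := by
  intro a b c
  induction a using TensorProduct.induction_on with
  | zero => rw [zero_lie b, lie_zero c]; simp
  | add a₁ a₂ h₁ h₂ =>
    rw [add_lie a₁ a₂ b, lie_add c a₁ a₂]
    simp only [map_add, LinearMap.add_apply]
    linear_combination h₁ + h₂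
  | tmul P x =>
    induction b using TensorProduct.induction_on with
    | zero => rw [lie_zero (P ⊗ₜ[R] x), zero_lie c]; simp
    | add b₁ b₂ h₁ h₂ =>
      rw [lie_add (P ⊗ₜ[R] x) b₁ b₂, add_lie b₁ b₂ c]
      simp only [map_add, LinearMap.add_apply]
      linear_combination h₁ + h₂
    | tmul Q y =>
      induction c using TensorProduct.induction_on with
      | zero => rw [lie_zero (Q ⊗ₜ[R] y), zero_lie (P ⊗ₜ[R] x)]; simp
      | add c₁ c₂ h₁ h₂ =>
        rw [lie_add (Q ⊗ₜ[R] y) c₁ c₂, add_lie c₁ c₂ (P ⊗ₜ[R] x)]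
        simp only [map_add, LinearMap.add_apply]
        linear_combination h₁ + h₂
      | tmul S z =>
        rw [LieAlgebra.ExtendScalars.bracket_tmul, LieAlgebra.ExtendScalars.bracket_tmul,
          LieAlgebra.ExtendScalars.bracket_tmul, hω, hω, hω]
        have e1 : B ⁅y, z⁆ x = B ⁅x, y⁆ z := by rw [hsym, hinv]
        have e2 : B ⁅z, x⁆ y = B ⁅x, y⁆ z := by rw [hinv, hsym]
        rw [e1, e2, ← add_mul, ← add_mul, ← lres_add, ← lres_add,
          show lderiv (P * Q) * S + lderiv (Q * S) * P + lderiv (S * P) * Q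
              = lderiv (P * Q * S) + lderiv (P * Q * S) by
            simp only [lderiv_mul]; ring,
          lres_add, lres_lderiv, add_zero, zero_mul]

end cocycle

/-- The centrally extended loop algebra `L̂ = (R[z,z⁻¹] ⊗ g) ⊕ R·K` with
bracket `[a + αK, b + βK] = [a,b]₀ + ω(a,b)K`, where
`ω(P⊗x,Q⊗y) = res(P'Q)·B(x,y)` and `K` is central, satisfies the Jacobi
identity. -/
theorem central_extension_jacobi {R : Type*} [CommRing R]
    {g : Type*} [LieRing g] [LieAlgebra R g]
    (B : g →ₗ[R] g →ₗ[R] R)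
    (hsym : ∀ x y : g, B x y = B y x)
    (hinv : ∀ x y z : g, B ⁅x, y⁆ z = B x ⁅y, z⁆)
    (ω : (R[T;T⁻¹] ⊗[R] g) →ₗ[R] (R[T;T⁻¹] ⊗[R] g) →ₗ[R] R)
    (hω : ∀ (P Q : R[T;T⁻¹]) (x y : g),
      ω (P ⊗ₜ[R] x) (Q ⊗ₜ[R] y) = lres (lderiv P * Q) * B x y) :
    ∀ u v w : (R[T;T⁻¹] ⊗[R] g) × R,
      centralBracket ω (centralBracket ω u v) w
        + centralBracket ω (centralBracket ω v w) u
        + centralBracket ω (centralBracket ω w u) v = 0 := by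
  intro u v w
  simp only [centralBracket, Prod.mk_add_mk, Prod.mk_eq_zero]
  constructor
  · have h := lie_jacobi w.1 u.1 v.1
    rw [← lie_skew ⁅u.1, v.1⁆ w.1, ← lie_skew ⁅v.1, w.1⁆ u.1, ← lie_skew ⁅w.1, u.1⁆ v.1,
      ← neg_add, ← neg_add, h, neg_zero]
  · exact cocycle_sum B hsym hinv ω hω u.1 v.1 w.1
end
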